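/- Let r, k and ℓ be positive integers, let c be a real number with 32²·r ≤ c < √k/2, and let G be a hypergraph on n ≥ k vertices all of whose edges are nonempty sets of size at most r. Set z = c/(32r) and p = 1 − 1/(8r). Then for every k-element subset A ⊆ V(G) with e(A) = ℓ and c ≤ m(A) ≤ √k/2 the following holds: if a random subset B ⊆ A is chosen by including each element of A independently with probability p, then with probability at least 1/4 the pair (A,B) is z-nice. -/

import Mathlib

open scoped Classical

/-- The number of edges of the hypergraph with edge collection `E` that are contained in `A`. -/
noncomputable def hyperEdgesIn {V : Type*} [DecidableEq V] (E : Finset (Finset V))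
    (A : Finset V) : ℕ :=
  (E.filter (fun e => e ⊆ A)).card

/-- The number of vertices of `A` that are non-isolated in `A`, i.e. contained in some edge
`e ⊆ A` of the hypergraph. -/
noncomputable def hyperM {V : Type*} [DecidableEq V] (E : Finset (Finset V))
    (A : Finset V) : ℕ :=
  (A.filter (fun v => ∃ e ∈ E, e ⊆ A ∧ v ∈ e)).card

/-- `h(A,B)`: the number of vertices `v ∈ A \ B` that are connected to `B`, i.e. such that
there is an edge `e` with `v ∈ e` and `e \ {v} ⊆ B`. -/
noncomputable def hyperH {V : Type*} [DecidableEq V] (E : Finset (Finset V))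
    (A B : Finset V) : ℕ :=
  ((A \ B).filter (fun v => ∃ e ∈ E, v ∈ e ∧ e \ {v} ⊆ B)).card

/-- `m(A,B)`: the number of vertices `v ∈ A \ B` that are non-isolated in `A`. -/
noncomputable def hyperMAB {V : Type*} [DecidableEq V] (E : Finset (Finset V))
    (A B : Finset V) : ℕ :=
  ((A \ B).filter (fun v => ∃ e ∈ E, e ⊆ A ∧ v ∈ e)).card

/-- `f(A,B) = m(A,B) - h(A,B)`: the number of vertices `v ∈ A \ B` that are non-isolated
in `A` but not connected to `B`. -/
noncomputable def hyperF {V : Type*} [DecidableEq V] (E : Finset (Finset V))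
    (A B : Finset V) : ℕ :=
  hyperMAB E A B - hyperH E A B

/-- A pair `(A,B)` with `B ⊆ A ⊆ V(G)` is `z`-nice if (i) `|A| = k` and `e(A) = ℓ`,
(ii) `z ≤ h(A,B) ≤ √k/2`, (iii) `|A \ B| ≥ 2·√k·f(A,B)`, and (iv) `|A \ B| ≥ √k`. -/
def Nice {V : Type*} [DecidableEq V] (E : Finset (Finset V)) (k ℓ : ℕ) (z : ℝ)
    (A B : Finset V) : Prop :=
  B ⊆ A ∧ A.card = k ∧ hyperEdgesIn E A = ℓ ∧
    z ≤ (hyperH E A B : ℝ) ∧ (hyperH E A B : ℝ) ≤ Real.sqrt k / 2 ∧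
    2 * Real.sqrt k * (hyperF E A B : ℝ) ≤ ((A \ B).card : ℝ) ∧
    Real.sqrt k ≤ ((A \ B).card : ℝ)

/-- Theorem: let `r`, `k`, `ℓ` be positive integers, `c` a real with `32²·r ≤ c < √k/2`, and
`G` a hypergraph on `n ≥ k` vertices all of whose edges are nonempty sets of size at most
`r`. Set `z = c/(32r)` and `p = 1 - 1/(8r)`. Then for every `k`-element subset `A` with
`e(A) = ℓ` and `c ≤ m(A) ≤ √k/2`: if a random subset `B ⊆ A` is chosen by including each
element of `A` independently with probability `p`, then with probability at least `1/4` the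
pair `(A,B)` is `z`-nice. -/

lemma aux_master {V : Type*} [DecidableEq V] (A S T : Finset V) (hS : S ⊆ A) (hT : T ⊆ A)
    (hST : Disjoint S T) (p q : ℝ) (hpq : p + q = 1) :
    ∑ B ∈ A.powerset, (if S ⊆ B ∧ Disjoint T B then p ^ B.card * q ^ (A \ B).card else 0)
      = p ^ S.card * q ^ T.card := by
  have key := Finset.prod_add (fun v : V => if v ∈ T then (0:ℝ) else p)
      (fun v : V => if v ∈ S then (0:ℝ) else q) A
  have hL : ∏ v ∈ A, ((if v ∈ T then (0:ℝ) else p) + (if v ∈ S then (0:ℝ) else q))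
      = p ^ S.card * q ^ T.card := by
    have hSA : S ⊆ A \ T := by
      intro v hv
      exact Finset.mem_sdiff.mpr ⟨hS hv, fun hvT => (Finset.disjoint_left.mp hST hv) hvT⟩
    rw [← Finset.prod_sdiff hT, ← Finset.prod_sdiff hSA]
    have h1 : ∏ v ∈ T, ((if v ∈ T then (0:ℝ) else p) + (if v ∈ S then (0:ℝ) else q))
        = q ^ T.card := by
      rw [Finset.prod_congr rfl (g := fun _ => q) (fun v hv => ?_), Finset.prod_const]
      have hvS : v ∉ S := fun h => (Finset.disjoint_left.mp hST h) hv
      simp [hv, hvS]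
    have h2 : ∏ v ∈ S, ((if v ∈ T then (0:ℝ) else p) + (if v ∈ S then (0:ℝ) else q))
        = p ^ S.card := by
      rw [Finset.prod_congr rfl (g := fun _ => p) (fun v hv => ?_), Finset.prod_const]
      have hvT : v ∉ T := fun h => (Finset.disjoint_right.mp hST h) hv
      simp [hv, hvT]
    have h3 : ∏ v ∈ (A \ T) \ S, ((if v ∈ T then (0:ℝ) else p) + (if v ∈ S then (0:ℝ) else q))
        = 1 := by
      apply Finset.prod_eq_one
      intro v hv
      have h1 := Finset.mem_sdiff.mp hv
      have h2 := Finset.mem_sdiff.mp h1.1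
      simp [h1.2, h2.2, hpq]
    rw [h1, h2, h3]; ring
  rw [hL] at key
  rw [key]
  apply Finset.sum_congr rfl
  intro B hB
  have hBA : B ⊆ A := Finset.mem_powerset.mp hB
  by_cases hTB : Disjoint T B
  · by_cases hSB : S ⊆ B
    · have e1 : ∏ v ∈ B, (if v ∈ T then (0:ℝ) else p) = p ^ B.card := by
        rw [Finset.prod_congr rfl (g := fun _ => p) (fun v hv => ?_), Finset.prod_const]
        simp [Finset.disjoint_right.mp hTB hv]
      have e2 : ∏ v ∈ A \ B, (if v ∈ S then (0:ℝ) else q) = q ^ (A \ B).card := by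
        rw [Finset.prod_congr rfl (g := fun _ => q) (fun v hv => ?_), Finset.prod_const]
        have : v ∉ S := fun h => (Finset.mem_sdiff.mp hv).2 (hSB h)
        simp [this]
      simp [hSB, hTB, e1, e2]
    · obtain ⟨v, hvS, hvB⟩ := Finset.not_subset.mp hSB
      have hvAB : v ∈ A \ B := Finset.mem_sdiff.mpr ⟨hS hvS, hvB⟩
      have : ∏ v ∈ A \ B, (if v ∈ S then (0:ℝ) else q) = 0 :=
        Finset.prod_eq_zero hvAB (by simp [hvS])
      simp [hSB, this]
  · obtain ⟨v, hvT, hvB⟩ := Finset.not_disjoint_iff.mp hTB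
    have : ∏ v ∈ B, (if v ∈ T then (0:ℝ) else p) = 0 :=
      Finset.prod_eq_zero hvB (by simp [hvT])
    simp [hTB, this]

lemma aux_total {V : Type*} [DecidableEq V] (A : Finset V) (p q : ℝ) (hpq : p + q = 1) :
    ∑ B ∈ A.powerset, p ^ B.card * q ^ (A \ B).card = 1 := by
  have := aux_master A ∅ ∅ (Finset.empty_subset _) (Finset.empty_subset _) (by simp) p q hpq
  simpa using this

lemma aux_point {V : Type*} [DecidableEq V] (A D : Finset V) (v : V) (hD : D ⊆ A)
    (hv : v ∈ A) (hvD : v ∉ D) (p q : ℝ) (hpq : p + q = 1) :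
    ∑ B ∈ A.powerset, (if D ⊆ B ∧ v ∉ B then p ^ B.card * q ^ (A \ B).card else 0)
      = p ^ D.card * q := by
  have := aux_master A D {v} hD (by simpa using hv)
    (by simpa [Finset.disjoint_singleton_right] using hvD) p q hpq
  simpa [Finset.disjoint_singleton_left] using this

lemma aux_single {V : Type*} [DecidableEq V] (A : Finset V) (v : V) (hv : v ∈ A)
    (p q : ℝ) (hpq : p + q = 1) :
    ∑ B ∈ A.powerset, (if v ∉ B then p ^ B.card * q ^ (A \ B).card else 0) = q := by
  have := aux_point A ∅ v (Finset.empty_subset _) hv (by simp) p q hpq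
  simpa using this

lemma aux_pair {V : Type*} [DecidableEq V] (A : Finset V) (u v : V) (hu : u ∈ A)
    (hv : v ∈ A) (huv : u ≠ v) (p q : ℝ) (hpq : p + q = 1) :
    ∑ B ∈ A.powerset, (if u ∉ B ∧ v ∉ B then p ^ B.card * q ^ (A \ B).card else 0)
      = q ^ 2 := by
  have := aux_master A ∅ {u, v} (Finset.empty_subset _)
    (by intro x hx; simp at hx; rcases hx with h | h <;> simp [h, hu, hv]) (by simp) p q hpq
  rw [Finset.card_pair huv] at this
  simp only [Finset.card_empty, pow_zero, one_mul] at this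
  rw [← this]
  apply Finset.sum_congr rfl
  intro B _
  congr 1
  simp [Finset.disjoint_insert_left, Finset.disjoint_singleton_left]

lemma aux_markov {ι : Type*} (s : Finset ι) (w Y : ι → ℝ) (hw : ∀ B ∈ s, 0 ≤ w B)
    (hY : ∀ B ∈ s, 0 ≤ Y B) (t : ℝ) (ht : 0 < t) (pred : ι → Prop)
    (hpred : ∀ B ∈ s, pred B → t ≤ Y B) :
    ∑ B ∈ s, (if pred B then w B else 0) ≤ (∑ B ∈ s, w B * Y B) / t := by
  rw [Finset.sum_div]
  apply Finset.sum_le_sum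
  intro B hB
  by_cases h : pred B
  · simp only [h, if_true]
    rw [le_div_iff₀ ht]
    exact mul_le_mul_of_nonneg_left (hpred B hB h) (hw B hB)
  · simp only [h, if_false]
    exact div_nonneg (mul_nonneg (hw B hB) (hY B hB)) ht.le

lemma card_sdiff_eq_sum {V : Type*} [DecidableEq V] (M B : Finset V) :
    ((M \ B).card : ℝ) = ∑ v ∈ M, (if v ∉ B then (1:ℝ) else 0) := by
  rw [Finset.sdiff_eq_filter, Finset.card_filter]
  push_cast
  rfl

lemma aux_exp {V : Type*} [DecidableEq V] (A M : Finset V) (hM : M ⊆ A)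
    (p q : ℝ) (hpq : p + q = 1) :
    ∑ B ∈ A.powerset, (p ^ B.card * q ^ (A \ B).card) * ((M \ B).card : ℝ)
      = M.card * q := by
  calc ∑ B ∈ A.powerset, (p ^ B.card * q ^ (A \ B).card) * ((M \ B).card : ℝ)
      = ∑ B ∈ A.powerset, ∑ v ∈ M,
          (if v ∉ B then p ^ B.card * q ^ (A \ B).card else 0) := by
        apply Finset.sum_congr rfl; intro B _
        rw [card_sdiff_eq_sum, Finset.mul_sum]
        apply Finset.sum_congr rfl; intro v _
        by_cases h : v ∈ B <;> simp [h]
    _ = ∑ v ∈ M, ∑ B ∈ A.powerset,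
          (if v ∉ B then p ^ B.card * q ^ (A \ B).card else 0) := Finset.sum_comm
    _ = ∑ v ∈ M, q := by
        apply Finset.sum_congr rfl; intro v hv
        exact aux_single A v (hM hv) p q hpq
    _ = M.card * q := by rw [Finset.sum_const, nsmul_eq_mul]

lemma aux_exp2 {V : Type*} [DecidableEq V] (A M : Finset V) (hM : M ⊆ A)
    (p q : ℝ) (hpq : p + q = 1) :
    ∑ B ∈ A.powerset, (p ^ B.card * q ^ (A \ B).card) * ((M \ B).card : ℝ) ^ 2
      = M.card * q + M.card * (M.card - 1) * q ^ 2 := by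
  calc ∑ B ∈ A.powerset, (p ^ B.card * q ^ (A \ B).card) * ((M \ B).card : ℝ) ^ 2
      = ∑ B ∈ A.powerset, ∑ u ∈ M, ∑ v ∈ M,
          (if u ∉ B ∧ v ∉ B then p ^ B.card * q ^ (A \ B).card else 0) := by
        apply Finset.sum_congr rfl; intro B _
        rw [card_sdiff_eq_sum, sq, Finset.sum_mul_sum, Finset.mul_sum]
        apply Finset.sum_congr rfl; intro u _
        rw [Finset.mul_sum]
        apply Finset.sum_congr rfl; intro v _
        by_cases hu : u ∈ B <;> by_cases hv : v ∈ B <;> simp [hu, hv]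
    _ = ∑ u ∈ M, ∑ v ∈ M, ∑ B ∈ A.powerset,
          (if u ∉ B ∧ v ∉ B then p ^ B.card * q ^ (A \ B).card else 0) := by
        rw [Finset.sum_comm]
        apply Finset.sum_congr rfl; intro u _
        exact Finset.sum_comm
    _ = ∑ u ∈ M, (q + (M.card - 1) * q ^ 2) := by
        apply Finset.sum_congr rfl; intro u hu
        rw [← Finset.add_sum_erase _ _ hu]
        have h1 : ∑ B ∈ A.powerset,
            (if u ∉ B ∧ u ∉ B then p ^ B.card * q ^ (A \ B).card else 0) = q := by
          refine Eq.trans ?_ (aux_single A u (hM hu) p q hpq)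
          apply Finset.sum_congr rfl; intro B _; simp only [and_self]
        have h2 : ∑ v ∈ M.erase u, ∑ B ∈ A.powerset,
            (if u ∉ B ∧ v ∉ B then p ^ B.card * q ^ (A \ B).card else 0)
            = (M.card - 1) * q ^ 2 := by
          have : ∀ v ∈ M.erase u, ∑ B ∈ A.powerset,
              (if u ∉ B ∧ v ∉ B then p ^ B.card * q ^ (A \ B).card else 0) = q ^ 2 := by
            intro v hv
            have hvM := Finset.mem_of_mem_erase hv
            exact aux_pair A u v (hM hu) (hM hvM) (Ne.symm (Finset.ne_of_mem_erase hv)) p q hpq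
          rw [Finset.sum_congr rfl this, Finset.sum_const, nsmul_eq_mul,
            Finset.card_erase_of_mem hu]
          congr 1
          have : 1 ≤ M.card := Finset.card_pos.mpr ⟨u, hu⟩
          push_cast [this]
          ring
        rw [h1, h2]
    _ = M.card * q + M.card * (M.card - 1) * q ^ 2 := by
        rw [Finset.sum_const, nsmul_eq_mul]; ring

lemma aux_cheb {V : Type*} [DecidableEq V] (A M : Finset V) (hM : M ⊆ A)
    (p q : ℝ) (hp : 0 ≤ p) (hq : 0 < q) (hpq : p + q = 1) (hMne : 0 < M.card) :
    ∑ B ∈ A.powerset, (if ((M \ B).card : ℝ) < M.card * q / 2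
        then p ^ B.card * q ^ (A \ B).card else 0)
      ≤ 4 / (M.card * q) := by
  set w : Finset V → ℝ := fun B => p ^ B.card * q ^ (A \ B).card with hw
  set μ : ℝ := M.card * q with hμ
  have hμ0 : 0 < μ := by positivity
  have hwn : ∀ B ∈ A.powerset, 0 ≤ w B := fun B _ => by positivity
  have hpred : ∀ B ∈ A.powerset, ((M \ B).card : ℝ) < μ / 2 →
      (μ / 2) ^ 2 ≤ (((M \ B).card : ℝ) - μ) ^ 2 := by
    intro B _ hB
    have h2 : (0:ℝ) ≤ ((M \ B).card : ℝ) := by positivity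
    nlinarith
  have key := aux_markov A.powerset w (fun B => (((M \ B).card : ℝ) - μ) ^ 2) hwn
    (fun B _ => sq_nonneg _) ((μ / 2) ^ 2) (by positivity)
    (fun B => ((M \ B).card : ℝ) < μ / 2) hpred
  · refine key.trans ?_
    have hvar : ∑ B ∈ A.powerset, w B * (((M \ B).card : ℝ) - μ) ^ 2 = μ * (1 - q) := by
      have e0 := aux_total A p q hpq
      have e1 := aux_exp A M hM p q hpq
      have e2 := aux_exp2 A M hM p q hpq
      have expand : ∀ B : Finset V, w B * (((M \ B).card : ℝ) - μ) ^ 2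
          = w B * ((M \ B).card : ℝ) ^ 2 - 2 * μ * (w B * ((M \ B).card : ℝ)) + μ ^ 2 * w B :=
        fun B => by ring
      rw [Finset.sum_congr rfl (fun B _ => expand B), Finset.sum_add_distrib,
        Finset.sum_sub_distrib, ← Finset.mul_sum, ← Finset.mul_sum, e1, e2, e0, hμ]
      ring
    rw [hvar]
    have h1q : 1 - q ≤ 1 := by linarith [hq.le]
    have : μ * (1 - q) ≤ μ := by nlinarith
    calc μ * (1 - q) / (μ / 2) ^ 2 ≤ μ / (μ / 2) ^ 2 := by gcongr
        _ = 4 / μ := by rw [div_eq_div_iff (by positivity) hμ0.ne.symm]; ring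

lemma aux_fexp {V : Type*} [DecidableEq V] (A M : Finset V) (hM : M ⊆ A) (D : V → Finset V)
    (hD : ∀ v ∈ M, D v ⊆ A ∧ v ∉ D v) (p q : ℝ) (hpq : p + q = 1) :
    ∑ B ∈ A.powerset, (p ^ B.card * q ^ (A \ B).card) *
      ((M.filter (fun v => v ∉ B ∧ ¬ D v ⊆ B)).card : ℝ)
      = ∑ v ∈ M, (q - p ^ (D v).card * q) := by
  calc ∑ B ∈ A.powerset, (p ^ B.card * q ^ (A \ B).card) *
        ((M.filter (fun v => v ∉ B ∧ ¬ D v ⊆ B)).card : ℝ)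
      = ∑ B ∈ A.powerset, ∑ v ∈ M,
          ((if v ∉ B then p ^ B.card * q ^ (A \ B).card else 0)
            - (if D v ⊆ B ∧ v ∉ B then p ^ B.card * q ^ (A \ B).card else 0)) := by
        apply Finset.sum_congr rfl; intro B _
        rw [Finset.card_filter]
        push_cast
        rw [Finset.mul_sum]
        apply Finset.sum_congr rfl; intro v _
        by_cases h1 : v ∈ B <;> by_cases h2 : D v ⊆ B <;> simp [h1, h2]
    _ = ∑ v ∈ M, ∑ B ∈ A.powerset,
          ((if v ∉ B then p ^ B.card * q ^ (A \ B).card else 0)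
            - (if D v ⊆ B ∧ v ∉ B then p ^ B.card * q ^ (A \ B).card else 0)) :=
        Finset.sum_comm
    _ = ∑ v ∈ M, (q - p ^ (D v).card * q) := by
        apply Finset.sum_congr rfl; intro v hv
        rw [Finset.sum_sub_distrib, aux_single A v (hM hv) p q hpq,
          aux_point A (D v) v (hD v hv).1 (hM hv) (hD v hv).2 p q hpq]

set_option maxHeartbeats 2000000 in
theorem stmt_16 (r k ℓ : ℕ) (hr : 1 ≤ r) (hk : 1 ≤ k) (hℓ : 1 ≤ ℓ)
    (c : ℝ) (hc0 : 32 ^ 2 * (r : ℝ) ≤ c) (hc1 : c < Real.sqrt k / 2)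
    (n : ℕ) (hn : k ≤ n)
    (E : Finset (Finset (Fin n))) (hE : ∀ e ∈ E, e.Nonempty ∧ e.card ≤ r)
    (z : ℝ) (hz : z = c / (32 * (r : ℝ)))
    (p : ℝ) (hp : p = 1 - 1 / (8 * (r : ℝ)))
    (A : Finset (Fin n)) (hA : A.card = k) (heA : hyperEdgesIn E A = ℓ)
    (hm1 : c ≤ (hyperM E A : ℝ)) (hm2 : (hyperM E A : ℝ) ≤ Real.sqrt k / 2) :
    (1 / 4 : ℝ) ≤ ∑ B ∈ A.powerset,
      (if Nice E k ℓ z A B then p ^ B.card * (1 - p) ^ (A.card - B.card) else 0) := by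
  classical
  have hr1 : (1:ℝ) ≤ (r:ℝ) := by exact_mod_cast hr
  have hr0 : (0:ℝ) < (r:ℝ) := by linarith
  set q : ℝ := 1 / (8 * (r:ℝ)) with hqdef
  have hq0 : 0 < q := by positivity
  have hrq : (r:ℝ) * q = 1/8 := by rw [hqdef]; field_simp
  have hq8 : q ≤ 1/8 := by
    have h := mul_nonneg (sub_nonneg.mpr hr1) hq0.le
    have h2 : ((r:ℝ) - 1) * q = 1/8 - q := by rw [sub_mul, hrq, one_mul]
    linarith only [h, h2]
  have hp' : p = 1 - q := hp
  have hpq : p + q = 1 := by rw [hp']; ring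
  have hp0 : 0 ≤ p := by rw [hp']; linarith
  have h1p : 1 - p = q := by rw [hp']; ring
  -- the set of non-isolated vertices
  set M : Finset (Fin n) := A.filter (fun v => ∃ e ∈ E, e ⊆ A ∧ v ∈ e) with hMdef
  have hMA : M ⊆ A := Finset.filter_subset _ _
  have hMm : hyperM E A = M.card := rfl
  set m : ℝ := (M.card : ℝ) with hmdef
  rw [hMm] at hm1 hm2
  have hcm : c ≤ m := hm1
  have hmhalf : m ≤ Real.sqrt k / 2 := hm2
  have hc1024 : 1024 * (r:ℝ) ≤ c := by norm_num at hc0; linarith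
  have hmq128 : 128 ≤ m * q := by
    have h := mul_nonneg (sub_nonneg.mpr (le_trans hc1024 hcm)) hq0.le
    have h2 : (m - 1024 * (r:ℝ)) * q = m * q - 1024 * ((r:ℝ) * q) := by ring
    rw [h2, hrq] at h
    linarith only [h]
  have hm0 : (0:ℝ) < m := by linarith
  have hMne : 0 < M.card := by
    have := hm0
    rw [hmdef] at this
    exact_mod_cast this
  have hsq : 0 ≤ Real.sqrt k := Real.sqrt_nonneg _
  have hk0 : (0:ℝ) ≤ (k:ℝ) := by positivity
  have hks : Real.sqrt k * Real.sqrt k = (k:ℝ) := Real.mul_self_sqrt hk0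
  have hsk2048 : 2048 * (r:ℝ) ≤ Real.sqrt k := by linarith
  have hkq : 256 * Real.sqrt k ≤ (k:ℝ) * q := by
    have h1 : (0:ℝ) ≤ (Real.sqrt k - 2048 * (r:ℝ)) * q * Real.sqrt k :=
      mul_nonneg (mul_nonneg (sub_nonneg.mpr hsk2048) hq0.le) hsq
    have h4 : (Real.sqrt k - 2048 * (r:ℝ)) * q * Real.sqrt k
        = (k:ℝ) * q - 256 * Real.sqrt k := by
      linear_combination q * hks - 2048 * Real.sqrt k * hrq
    rw [h4] at h1
    linarith only [h1]
  have hkq0 : 0 < (k:ℝ) * q := by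
    have h4 : (0:ℝ) < Real.sqrt k := by linarith
    linarith
  -- witness edges
  have hwit : ∀ v ∈ M, ∃ e, e ∈ E ∧ e ⊆ A ∧ v ∈ e := by
    intro v hv
    obtain ⟨e, he, h1, h2⟩ := (Finset.mem_filter.mp hv).2
    exact ⟨e, he, h1, h2⟩
  choose! ev hev1 hev2 hev3 using hwit
  set D : Fin n → Finset (Fin n) := fun v => ev v \ {v} with hDdef
  have hDsub : ∀ v ∈ M, D v ⊆ A := fun v hv => Finset.sdiff_subset.trans (hev2 v hv)
  have hDv : ∀ v, v ∉ D v := fun v => by simp [hDdef]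
  have hDcard : ∀ v ∈ M, ((D v).card : ℝ) * q ≤ 1/8 := by
    intro v hv
    have h1 : (D v).card ≤ r :=
      le_trans (Finset.card_le_card Finset.sdiff_subset) (hE _ (hev1 v hv)).2
    have h1' : ((D v).card : ℝ) ≤ (r:ℝ) := by exact_mod_cast h1
    calc ((D v).card : ℝ) * q ≤ (r:ℝ) * q := by gcongr
      _ = 1/8 := hrq
  -- weights
  set w : Finset (Fin n) → ℝ := fun B => p ^ B.card * q ^ (A \ B).card with hwdef
  have hw0 : ∀ B : Finset (Fin n), 0 ≤ w B := fun B => by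
    rw [hwdef]; positivity
  -- f upper bound random variable
  set fb : Finset (Fin n) → ℕ :=
    fun B => (M.filter (fun v => v ∉ B ∧ ¬ D v ⊆ B)).card with hfbdef
  have hEfb : ∑ B ∈ A.powerset, w B * (fb B : ℝ) ≤ m * q / 8 := by
    rw [hwdef, hfbdef]
    rw [aux_fexp A M hMA D (fun v hv => ⟨hDsub v hv, hDv v⟩) p q hpq]
    have hterm : ∀ v ∈ M, q - p ^ (D v).card * q ≤ q * (1/8) := by
      intro v hv
      have hb := one_add_mul_le_pow (a := -q) (by linarith : (-2:ℝ) ≤ -q) (D v).card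
      have hb' : 1 - ((D v).card : ℝ) * q ≤ p ^ (D v).card := by
        rw [hp']
        calc 1 - ((D v).card : ℝ) * q = 1 + ((D v).card : ℝ) * (-q) := by ring
          _ ≤ (1 + -q) ^ (D v).card := hb
          _ = (1 - q) ^ (D v).card := by ring_nf
      have e1 : q * (1 - p ^ (D v).card) ≤ q * (((D v).card : ℝ) * q) :=
        mul_le_mul_of_nonneg_left (by linarith only [hb']) hq0.le
      have e2 : q * (((D v).card : ℝ) * q) ≤ q * (1/8) :=
        mul_le_mul_of_nonneg_left (hDcard v hv) hq0.le
      calc q - p ^ (D v).card * q = q * (1 - p ^ (D v).card) := by ring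
        _ ≤ q * (((D v).card : ℝ) * q) := e1
        _ ≤ q * (1/8) := e2
    calc ∑ v ∈ M, (q - p ^ (D v).card * q) ≤ ∑ v ∈ M, q * (1/8) :=
        Finset.sum_le_sum hterm
      _ = m * q / 8 := by rw [Finset.sum_const, nsmul_eq_mul]; ring
  -- the three bad events
  have hbad1 : ∑ B ∈ A.powerset, (if ((M \ B).card : ℝ) < m * q / 2 then w B else 0)
      ≤ 1/32 := by
    have h := aux_cheb A M hMA p q hp0 hq0 hpq hMne
    refine le_trans h ?_
    rw [div_le_iff₀ (by positivity)]
    linarith only [hmq128]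
  have hbad2 : ∑ B ∈ A.powerset, (if ((A \ B).card : ℝ) < (k:ℝ) * q / 2 then w B else 0)
      ≤ 1/32 := by
    have h := aux_cheb A A (le_refl A) p q hp0 hq0 hpq (by omega : 0 < A.card)
    rw [hA] at h
    refine le_trans h ?_
    rw [div_le_iff₀ hkq0]
    linarith only [hkq, hsk2048, hr1]
  have hbad3 : ∑ B ∈ A.powerset, (if m * q / 4 < (fb B : ℝ) then w B else 0)
      ≤ 1/2 := by
    have h := aux_markov A.powerset w (fun B => (fb B : ℝ)) (fun B _ => hw0 B)
      (fun B _ => by positivity) (m * q / 4) (by positivity)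
      (fun B => m * q / 4 < (fb B : ℝ)) (fun B _ hB => le_of_lt hB)
    refine le_trans h ?_
    have heq : (m * q / 8) / (m * q / 4) = 1/2 := by
      rw [div_eq_iff (by positivity : m * q / 4 ≠ 0)]; ring
    calc (∑ B ∈ A.powerset, w B * (fb B : ℝ)) / (m * q / 4)
        ≤ (m * q / 8) / (m * q / 4) := by gcongr
      _ = 1/2 := heq
  -- Good event
  set Good : Finset (Fin n) → Prop := fun B =>
    m * q / 2 ≤ ((M \ B).card : ℝ) ∧ (k:ℝ) * q / 2 ≤ ((A \ B).card : ℝ) ∧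
      (fb B : ℝ) ≤ m * q / 4 with hGooddef
  have hsplit : ∀ B ∈ A.powerset, w B ≤ (if Good B then w B else 0)
      + ((if ((M \ B).card : ℝ) < m * q / 2 then w B else 0)
      + ((if ((A \ B).card : ℝ) < (k:ℝ) * q / 2 then w B else 0)
      + (if m * q / 4 < (fb B : ℝ) then w B else 0))) := by
    intro B _
    have t0 : 0 ≤ (if Good B then w B else 0) := by
      split
      · exact hw0 B
      · exact le_rfl
    have t1 : 0 ≤ (if ((M \ B).card : ℝ) < m * q / 2 then w B else 0) := by
      split
      · exact hw0 B
      · exact le_rfl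
    have t2 : 0 ≤ (if ((A \ B).card : ℝ) < (k:ℝ) * q / 2 then w B else 0) := by
      split
      · exact hw0 B
      · exact le_rfl
    have t3 : 0 ≤ (if m * q / 4 < (fb B : ℝ) then w B else 0) := by
      split
      · exact hw0 B
      · exact le_rfl
    rcases lt_or_ge (((M \ B).card : ℝ)) (m * q / 2) with h1 | h1
    · rw [if_pos h1]
      linarith only [t0, t2, t3]
    · rcases lt_or_ge (((A \ B).card : ℝ)) ((k:ℝ) * q / 2) with h2 | h2
      · rw [if_pos h2]
        linarith only [t0, t1, t3]
      · rcases lt_or_ge (m * q / 4) ((fb B : ℝ)) with h3 | h3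
        · rw [if_pos h3]
          linarith only [t0, t1, t2]
        · have hG : Good B := ⟨h1, h2, h3⟩
          rw [if_pos hG]
          linarith only [t1, t2, t3]
  have htot : ∑ B ∈ A.powerset, w B = 1 := aux_total A p q hpq
  have hGoodsum : (7/16 : ℝ) ≤ ∑ B ∈ A.powerset, (if Good B then w B else 0) := by
    have hs := Finset.sum_le_sum hsplit
    rw [htot] at hs
    rw [Finset.sum_add_distrib, Finset.sum_add_distrib, Finset.sum_add_distrib] at hs
    linarith only [hs, hbad1, hbad2, hbad3]
  -- Good implies Nice
  have hGoodNice : ∀ B ∈ A.powerset, Good B → Nice E k ℓ z A B := by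
    intro B hBp hG
    have hBA : B ⊆ A := Finset.mem_powerset.mp hBp
    obtain ⟨g1, g2, g3⟩ := hG
    have hMAB : hyperMAB E A B = (M \ B).card := by
      unfold hyperMAB
      congr 1
      ext v
      simp only [Finset.mem_filter, Finset.mem_sdiff, hMdef]
      tauto
    have hH_le : hyperH E A B ≤ hyperMAB E A B := by
      apply Finset.card_le_card
      intro v hv
      rw [Finset.mem_filter] at hv ⊢
      obtain ⟨hvAB, e, heE, hve, heB⟩ := hv
      refine ⟨hvAB, e, heE, ?_, hve⟩
      intro x hx
      by_cases hxv : x = v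
      · subst hxv; exact (Finset.mem_sdiff.mp hvAB).1
      · exact hBA (heB (Finset.mem_sdiff.mpr ⟨hx, by simp [hxv]⟩))
    have hMAB_le : hyperMAB E A B ≤ hyperH E A B + fb B := by
      have hsub : (A \ B).filter (fun v => ∃ e ∈ E, e ⊆ A ∧ v ∈ e) ⊆
          ((A \ B).filter (fun v => ∃ e ∈ E, v ∈ e ∧ e \ {v} ⊆ B)) ∪
          (M.filter (fun v => v ∉ B ∧ ¬ D v ⊆ B)) := by
        intro v hv
        rw [Finset.mem_filter] at hv
        obtain ⟨hvAB, hP⟩ := hv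
        by_cases hcon : ∃ e ∈ E, v ∈ e ∧ e \ {v} ⊆ B
        · exact Finset.mem_union_left _ (Finset.mem_filter.mpr ⟨hvAB, hcon⟩)
        · apply Finset.mem_union_right
          have hvM : v ∈ M := by
            rw [hMdef]
            exact Finset.mem_filter.mpr ⟨(Finset.mem_sdiff.mp hvAB).1, hP⟩
          refine Finset.mem_filter.mpr ⟨hvM, (Finset.mem_sdiff.mp hvAB).2, fun hDB => hcon ?_⟩
          exact ⟨ev v, hev1 v hvM, hev3 v hvM, hDB⟩
      calc hyperMAB E A B
          ≤ (((A \ B).filter (fun v => ∃ e ∈ E, v ∈ e ∧ e \ {v} ⊆ B)) ∪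
            (M.filter (fun v => v ∉ B ∧ ¬ D v ⊆ B))).card := Finset.card_le_card hsub
        _ ≤ hyperH E A B + fb B := Finset.card_union_le _ _
    have hMABr : (hyperMAB E A B : ℝ) = ((M \ B).card : ℝ) := by rw [hMAB]
    have hMAB_le_r : (hyperMAB E A B : ℝ) ≤ (hyperH E A B : ℝ) + (fb B : ℝ) := by
      exact_mod_cast hMAB_le
    have hH_le_r : (hyperH E A B : ℝ) ≤ (hyperMAB E A B : ℝ) := by exact_mod_cast hH_le
    have hF_r : (hyperF E A B : ℝ) = (hyperMAB E A B : ℝ) - (hyperH E A B : ℝ) := by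
      unfold hyperF
      exact Nat.cast_sub hH_le
    have hMm_le : ((M \ B).card : ℝ) ≤ m := by
      rw [hmdef]
      exact_mod_cast Finset.card_le_card Finset.sdiff_subset
    have hzq : z = c * q / 4 := by
      rw [hz, hqdef]; ring
    refine ⟨hBA, hA, heA, ?_, ?_, ?_, ?_⟩
    · -- z ≤ h
      rw [hzq]
      have hHge : (hyperH E A B : ℝ) ≥ m * q / 2 - m * q / 4 := by
        rw [hMABr] at hMAB_le_r
        linarith only [g3, g1, hMAB_le_r]
      have hmc := mul_nonneg (sub_nonneg.mpr hcm) hq0.le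
      have hmc2 : (m - c) * q = m * q - c * q := by ring
      linarith only [hHge, hmc, hmc2]
    · -- h ≤ √k/2
      rw [hMABr] at hH_le_r
      linarith
    · -- 2√k f ≤ |A\B|
      have hF_le : (hyperF E A B : ℝ) ≤ (fb B : ℝ) := by
        rw [hF_r]; linarith
      have hF0 : (0:ℝ) ≤ (hyperF E A B : ℝ) := by positivity
      have h2 : 2 * Real.sqrt k * (hyperF E A B : ℝ) ≤ 2 * Real.sqrt k * (m * q / 4) :=
        mul_le_mul_of_nonneg_left (by linarith only [hF_le, g3]) (by positivity)
      have hskm : Real.sqrt k * m ≤ (k:ℝ) / 2 := by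
        have := mul_le_mul_of_nonneg_left hmhalf hsq
        have he : Real.sqrt k * (Real.sqrt k / 2) = (k:ℝ) / 2 := by
          linear_combination (1/2) * hks
        linarith only [this, he]
      have h3 : 2 * Real.sqrt k * (m * q / 4) ≤ (k:ℝ) * q / 4 := by
        have := mul_le_mul_of_nonneg_right hskm (by positivity : (0:ℝ) ≤ q / 2)
        calc 2 * Real.sqrt k * (m * q / 4) = (Real.sqrt k * m) * (q / 2) := by ring
          _ ≤ ((k:ℝ) / 2) * (q / 2) := this
          _ = (k:ℝ) * q / 4 := by ring
      have h4 : (k:ℝ) * q / 4 ≤ (k:ℝ) * q / 2 := by linarith only [hkq0.le]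
      linarith only [h2, h3, h4, g2]
    · -- √k ≤ |A\B|
      have : Real.sqrt k ≤ (k:ℝ) * q / 2 := by linarith only [hkq, hsq]
      linarith only [this, g2]
  -- conclude
  have hfinal : ∑ B ∈ A.powerset, (if Good B then w B else 0)
      ≤ ∑ B ∈ A.powerset,
        (if Nice E k ℓ z A B then p ^ B.card * (1 - p) ^ (A.card - B.card) else 0) := by
    apply Finset.sum_le_sum
    intro B hBp
    have hBA : B ⊆ A := Finset.mem_powerset.mp hBp
    have hcard : A.card - B.card = (A \ B).card := (Finset.card_sdiff_of_subset hBA).symm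
    have hwB : p ^ B.card * (1 - p) ^ (A.card - B.card) = w B := by
      rw [h1p, hcard, hwdef]
    rw [hwB]
    by_cases hG : Good B
    · rw [if_pos hG, if_pos (hGoodNice B hBp hG)]
    · rw [if_neg hG]
      split
      · exact hw0 B
      · exact le_rfl
  linarith only [hGoodsum, hfinal]
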